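/- Let n ≥ 2, let L be a real n×n matrix with L 1_n = 0_n, let Q be as in the context, and let a, b > 0. Let γ : ℝ → ℝ^n be twice differentiable, γ_d : ℝ → ℝ twice differentiable, and α : ℝ → ℝ^n. Define ξ_1(t) = Q γ(t), ξ_2(t) = γ̇(t) − γ̇_d(t) 1_n, and χ(t) = b ξ_1(t) + Q ξ_2(t). If γ̈(t) = −b ξ_2(t) − a L γ(t) − α(t) for all t, then χ̇(t) = −(a/b) L̄ χ(t) + (a/b) Q L ξ_2(t) − Q α(t) and ξ̇_2(t) = −(a/b) L Qᵀ χ(t) − (b I_n − (a/b) L) ξ_2(t) − α(t) − γ̈_d(t) 1_n, where L̄ = Q L Qᵀ. -/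

import Mathlib

open Matrix

/-- With `n ≥ 2`, `L 1ₙ = 0`, `Q` as in the context, gains `a, b > 0`,
`γ : ℝ → ℝⁿ` twice differentiable (derivative `dγ`, second derivative `ddγ`),
`γ_d : ℝ → ℝ` twice differentiable (derivatives `dγd`, `ddγd`), define
`ξ₁ = Q γ`, `ξ₂ = γ̇ − γ̇_d 1ₙ`, `χ = b ξ₁ + Q ξ₂`. If
`γ̈ = −b ξ₂ − a L γ − α`, then
`χ̇ = −(a/b) L̄ χ + (a/b) Q L ξ₂ − Q α` and
`ξ̇₂ = −(a/b) L Qᵀ χ − (b I − (a/b) L) ξ₂ − α − γ̈_d 1ₙ`, with `L̄ = Q L Qᵀ`. -/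
theorem stmt_9 (n : ℕ) (hn : 2 ≤ n)
    (L : Matrix (Fin n) (Fin n) ℝ)
    (hL : L.mulVec (fun _ => (1 : ℝ)) = 0)
    (Q : Matrix (Fin (n - 1)) (Fin n) ℝ)
    (hQ1 : Q.mulVec (fun _ => (1 : ℝ)) = 0)
    (hQQt : Q * Qᵀ = 1)
    (hQtQ : Qᵀ * Q = 1 - (n : ℝ)⁻¹ • Matrix.of (fun _ _ => (1 : ℝ)))
    (a b : ℝ) (ha : 0 < a) (hb : 0 < b)
    (γ dγ ddγ : ℝ → Fin n → ℝ) (γd dγd ddγd : ℝ → ℝ)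
    (hγ : ∀ t, HasDerivAt γ (dγ t) t)
    (hdγ : ∀ t, HasDerivAt dγ (ddγ t) t)
    (hγd : ∀ t, HasDerivAt γd (dγd t) t)
    (hdγd : ∀ t, HasDerivAt dγd (ddγd t) t)
    (α : ℝ → Fin n → ℝ)
    (ξ1 : ℝ → Fin (n - 1) → ℝ) (hξ1 : ∀ t, ξ1 t = Q.mulVec (γ t))
    (ξ2 : ℝ → Fin n → ℝ) (hξ2 : ∀ t, ξ2 t = dγ t - fun _ => dγd t)
    (χ : ℝ → Fin (n - 1) → ℝ) (hχ : ∀ t, χ t = b • ξ1 t + Q.mulVec (ξ2 t))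
    (hdyn : ∀ t, ddγ t = -(b • ξ2 t) - a • L.mulVec (γ t) - α t) :
    ∀ t : ℝ,
      HasDerivAt χ
        (-((a / b) • (Q * L * Qᵀ).mulVec (χ t)) + (a / b) • (Q * L).mulVec (ξ2 t)
          - Q.mulVec (α t)) t ∧
      HasDerivAt ξ2
        (-((a / b) • (L * Qᵀ).mulVec (χ t)) - (b • ξ2 t - (a / b) • L.mulVec (ξ2 t))
          - α t - fun _ => ddγd t) t := by
  intro t
  have hb' : b ≠ 0 := ne_of_gt hb
  -- constant-vector facts
  have hone : ∀ (M : Matrix (Fin (n-1)) (Fin n) ℝ), M.mulVec (fun _ => (1:ℝ)) = 0 →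
      ∀ c : ℝ, M.mulVec (fun _ => c) = 0 := by
    intro M hM c
    have : (fun _ : Fin n => c) = c • (fun _ : Fin n => (1:ℝ)) := by
      funext i; simp
    rw [this, Matrix.mulVec_smul, hM, smul_zero]
  have hQc := hone Q hQ1
  -- L * Qᵀ * Q = L
  have hLJ : L * Matrix.of (fun _ _ => (1:ℝ)) = 0 := by
    ext i j
    have := congrFun hL i
    simpa [Matrix.mul_apply, Matrix.mulVec, dotProduct] using this
  have hLQQ : L * Qᵀ * Q = L := by
    rw [Matrix.mul_assoc, hQtQ, Matrix.mul_sub, Matrix.mul_one, Matrix.mul_smul, hLJ,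
      smul_zero, sub_zero]
  -- key identity
  have hkey : (L * Qᵀ).mulVec (χ t) = b • L.mulVec (γ t) + L.mulVec (ξ2 t) := by
    rw [hχ, hξ1, Matrix.mulVec_add, Matrix.mulVec_smul,
      Matrix.mulVec_mulVec, Matrix.mulVec_mulVec, hLQQ]
  -- derivative of ξ2
  have hconst : HasDerivAt (fun s => (fun _ : Fin n => dγd s)) (fun _ => ddγd t) t := by
    rw [hasDerivAt_pi]
    intro i; exact hdγd t
  have hξ2eq : ξ2 = fun s => dγ s - fun _ => dγd s := funext hξ2
  have hξ2' : HasDerivAt ξ2 (ddγ t - fun _ => ddγd t) t := by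
    rw [hξ2eq]; exact (hdγ t).sub hconst
  -- derivative of χ via CLM
  let Qc : (Fin n → ℝ) →L[ℝ] (Fin (n-1) → ℝ) :=
    LinearMap.toContinuousLinearMap (Matrix.mulVecLin Q)
  have hQapp : ∀ v, Qc v = Q.mulVec v := fun v => rfl
  have hQγ : HasDerivAt (fun s => Q.mulVec (γ s)) (Q.mulVec (dγ t)) t := by
    have := Qc.hasFDerivAt.comp_hasDerivAt t (hγ t)
    exact this
  have hQξ2 : HasDerivAt (fun s => Q.mulVec (ξ2 s)) (Q.mulVec (ddγ t - fun _ => ddγd t)) t := by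
    have := Qc.hasFDerivAt.comp_hasDerivAt t hξ2'
    exact this
  have hχeq : χ = fun s => b • Q.mulVec (γ s) + Q.mulVec (ξ2 s) := by
    funext s; rw [hχ, hξ1]
  have hχ' : HasDerivAt χ (b • Q.mulVec (dγ t) + Q.mulVec (ddγ t - fun _ => ddγd t)) t := by
    rw [hχeq]; exact (hQγ.const_smul b).add hQξ2
  -- dγ via ξ2
  have hdγeq : dγ t = ξ2 t + fun _ => dγd t := by
    rw [hξ2]; abel
  constructor
  · convert hχ' using 1
    rw [Matrix.mul_assoc, ← Matrix.mulVec_mulVec, hkey, hdγeq, hdyn]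
    simp only [Matrix.mulVec_add, Matrix.mulVec_sub, Matrix.mulVec_smul, Matrix.mulVec_neg,
      Matrix.mulVec_mulVec, smul_add, smul_neg, smul_smul, hQc, neg_add_rev, neg_neg]
    rw [div_mul_cancel₀ a hb']
    module
  · convert hξ2' using 1
    rw [← Matrix.mulVec_mulVec] at hkey ⊢
    rw [hkey, hdyn]
    simp only [smul_add, smul_smul, smul_neg]
    rw [div_mul_cancel₀ a hb']
    module
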